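/- Let 𝓛 be a learning space on a finite set X with n ≥ 1 elements. Then there exists a set Σ of learning sequences of 𝓛 with |Σ| ≤ C(n, ⌊n/2⌋) (the binomial coefficient n choose ⌊n/2⌋) such that 𝓛_Σ = 𝓛. -/

import Mathlib

/-- A learning space on a finite set `X`. -/
def IsLearningSpace {α : Type*} [DecidableEq α] (X : Finset α) (L : Set (Finset α)) : Prop :=
  ∅ ∈ L ∧
  (∀ S ∈ L, S ⊆ X) ∧
  (∀ x ∈ X, ∃ S ∈ L, x ∈ S) ∧
  (∀ S ∈ L, S.Nonempty → ∃ x ∈ S, S.erase x ∈ L) ∧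
  (∀ S ∈ L, ∀ T ∈ L, S ∪ T ∈ L)

/-- A learning sequence of a learning space `L` on `X`. -/
def IsLearningSequence {α : Type*} [DecidableEq α] (X : Finset α) (L : Set (Finset α))
    (σ : List α) : Prop :=
  σ.Nodup ∧ σ.toFinset = X ∧ ∀ i ≤ σ.length, (σ.take i).toFinset ∈ L

/-- The family of all unions of prefixes of members of `Σ`. -/
def LSigma {α : Type*} [DecidableEq α] (Sig : Finset (List α)) : Set (Finset α) :=
  { S | ∃ f : List α → ℕ, S = Sig.sup fun σ => (σ.take (f σ)).toFinset }

set_option linter.unusedSectionVars false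
set_option linter.unusedVariables false

namespace Stmt6Aux

variable {α : Type*} [DecidableEq α] {X : Finset α} {L : Set (Finset α)}

lemma top_mem (h : IsLearningSpace X L) : X ∈ L := by
  have key : ∀ Y : Finset α, Y ⊆ X → ∃ S ∈ L, Y ⊆ S := by
    intro Y
    induction Y using Finset.induction_on with
    | empty => exact fun _ => ⟨∅, h.1, Finset.empty_subset _⟩
    | insert =>
      rename_i x Y _ _
      intro hins
      obtain ⟨S, hS, hYS⟩ := (by assumption : Y ⊆ X → ∃ S ∈ L, Y ⊆ S)
        (fun a ha => hins (Finset.mem_insert_of_mem ha))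
      obtain ⟨T, hT, hxT⟩ := h.2.2.1 x (hins (Finset.mem_insert_self _ _))
      refine ⟨S ∪ T, h.2.2.2.2 S hS T hT, ?_⟩
      intro a ha
      rcases Finset.mem_insert.1 ha with rfl | ha
      · exact Finset.mem_union_right _ hxT
      · exact Finset.mem_union_left _ (hYS ha)
  obtain ⟨S, hS, hXS⟩ := key X Finset.Subset.rfl
  have hSX : S = X := Finset.Subset.antisymm (h.2.1 S hS) hXS
  exact hSX ▸ hS

/-- Lemma A: a learning path down to any T ∈ L. -/
lemma exists_down (h : IsLearningSpace X L) :
    ∀ (k : ℕ) (T : Finset α), T ∈ L → T.card ≤ k →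
      ∃ l : List α, l.Nodup ∧ l.toFinset = T ∧ ∀ i, (l.take i).toFinset ∈ L := by
  intro k
  induction k with
  | zero =>
    intro T hT hc
    have hTe : T = ∅ := Finset.card_eq_zero.1 (Nat.le_zero.1 hc)
    subst hTe
    exact ⟨[], by simp [h.1]⟩
  | succ k ih =>
    intro T hT hc
    rcases T.eq_empty_or_nonempty with rfl | hne
    · exact ⟨[], by simp [h.1]⟩
    · obtain ⟨x, hxT, hTe⟩ := h.2.2.2.1 T hT hne
      obtain ⟨l, hnd, hfs, hpre⟩ := ih (T.erase x) hTe (by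
        have := Finset.card_erase_of_mem hxT; omega)
      have hxl : x ∉ l := by
        intro hx
        have : x ∈ T.erase x := hfs ▸ List.mem_toFinset.2 hx
        exact (Finset.mem_erase.1 this).1 rfl
      have hfull : (l ++ [x]).toFinset = T := by
        rw [List.toFinset_append, hfs]
        have hx1 : ([x] : List α).toFinset = {x} := by simp
        rw [hx1, Finset.union_comm, ← Finset.insert_eq]
        exact Finset.insert_erase hxT
      refine ⟨l ++ [x], ?_, hfull, ?_⟩
      · refine List.Nodup.append hnd (List.nodup_singleton x) ?_
        intro a ha ha'
        rw [List.mem_singleton] at ha'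
        exact hxl (ha' ▸ ha)
      · intro i
        by_cases hi : i ≤ l.length
        · rw [List.take_append_of_le_length hi]; exact hpre i
        · rw [List.take_of_length_le (by simp; omega), hfull]; exact hT

/-- Lemma B'': climbing step. -/
lemma exists_step (h : IsLearningSpace X L) :
    ∀ (l : List α) (P : Finset α), P ∈ L → (∀ i, P ∪ (l.take i).toFinset ∈ L) →
      ∀ S ∈ L, P ⊆ S → ¬ (P ∪ l.toFinset ⊆ S) →
      ∃ x, x ∉ S ∧ insert x S ∈ L ∧ x ∈ P ∪ l.toFinset := by
  intro l
  induction l with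
  | nil =>
    intro P _ _ S _ hPS hns
    exact absurd (by simpa using hPS) hns
  | cons a t ih =>
    intro P hP hpre S hS hPS hns
    have hPa : P ∪ {a} ∈ L := by simpa using hpre 1
    by_cases ha : a ∈ S
    · have h1 : insert a P ∈ L := by
        rwa [show P ∪ {a} = insert a P from by ext b; simp [or_comm]] at hPa
      have h2 : ∀ i, insert a P ∪ (t.take i).toFinset ∈ L := by
        intro i
        have := hpre (i + 1)
        simp only [List.take_succ_cons, List.toFinset_cons] at this
        rwa [Finset.union_insert, ← Finset.insert_union] at this
      have h3 : insert a P ⊆ S := Finset.insert_subset ha hPS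
      have h4 : ¬ (insert a P ∪ t.toFinset ⊆ S) := by
        intro hc
        apply hns
        simp only [List.toFinset_cons]
        rw [Finset.union_insert, ← Finset.insert_union]; exact hc
      obtain ⟨x, hx1, hx2, hx3⟩ := ih (insert a P) h1 h2 S hS h3 h4
      refine ⟨x, hx1, hx2, ?_⟩
      simp only [List.toFinset_cons]
      rw [Finset.union_insert, ← Finset.insert_union]
      exact hx3
    · refine ⟨a, ha, ?_, by simp⟩
      have : S ∪ (P ∪ {a}) ∈ L := h.2.2.2.2 S hS _ hPa
      have heq : S ∪ (P ∪ {a}) = insert a S := by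
        rw [← Finset.union_assoc, Finset.union_eq_left.2 hPS]
        ext b; simp [or_comm]
      rwa [heq] at this

/-- Lemma B: one-step extension between nested members of L. -/
lemma exists_insert_mem (h : IsLearningSpace X L) (S T : Finset α) (hS : S ∈ L) (hT : T ∈ L)
    (hST : S ⊆ T) (hne : S ≠ T) : ∃ x, x ∈ T ∧ x ∉ S ∧ insert x S ∈ L := by
  obtain ⟨l, hnd, hfs, hpre⟩ := exists_down h T.card T hT le_rfl
  have hpre' : ∀ i, (∅ : Finset α) ∪ (l.take i).toFinset ∈ L := by simpa using hpre
  have hns : ¬ ((∅ : Finset α) ∪ l.toFinset ⊆ S) := by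
    simp only [Finset.empty_union, hfs]
    intro hc
    exact hne (Finset.Subset.antisymm hST hc)
  obtain ⟨x, hx1, hx2, hx3⟩ := exists_step h l ∅ h.1 hpre' S hS (Finset.empty_subset _) hns
  refine ⟨x, ?_, hx1, hx2⟩
  simpa [hfs] using hx3

/-- Lemma C: a path in L from S up to T. -/
lemma exists_path (h : IsLearningSpace X L) :
    ∀ (k : ℕ) (S T : Finset α), S ∈ L → T ∈ L → S ⊆ T → (T \ S).card ≤ k →
      ∃ l : List α, l.Nodup ∧ (∀ x ∈ l, x ∉ S) ∧ S ∪ l.toFinset = T ∧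
        ∀ i, S ∪ (l.take i).toFinset ∈ L := by
  intro k
  induction k with
  | zero =>
    intro S T hS hT hST hc
    have : T \ S = ∅ := Finset.card_eq_zero.1 (Nat.le_zero.1 hc)
    have hTS : T ⊆ S := by
      intro a ha
      by_contra hna
      exact absurd (Finset.mem_sdiff.2 ⟨ha, hna⟩) (by simp [this])
    have : S = T := Finset.Subset.antisymm hST hTS
    subst this
    exact ⟨[], by simp [hS]⟩
  | succ k ih =>
    intro S T hS hT hST hc
    by_cases hne : S = T
    · subst hne; exact ⟨[], by simp [hS]⟩
    · obtain ⟨x, hxT, hxS, hins⟩ := exists_insert_mem h S T hS hT hST hne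
      have hsub : insert x S ⊆ T := Finset.insert_subset hxT hST
      have hcard : (T \ insert x S).card ≤ k := by
        have h1 : T \ insert x S = (T \ S).erase x := by
          ext a; simp [Finset.mem_sdiff, Finset.mem_erase, Finset.mem_insert]; tauto
        have h2 : x ∈ T \ S := Finset.mem_sdiff.2 ⟨hxT, hxS⟩
        rw [h1]
        have := Finset.card_erase_of_mem h2
        omega
      obtain ⟨l, hnd, hnotin, hfull, hpre⟩ := ih (insert x S) T hins hT hsub hcard
      have hxl : x ∉ l := fun hx => (hnotin x hx) (Finset.mem_insert_self _ _)
      refine ⟨x :: l, List.nodup_cons.2 ⟨hxl, hnd⟩, ?_, ?_, ?_⟩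
      · intro y hy
        rcases List.mem_cons.1 hy with rfl | hy
        · exact hxS
        · exact fun hyS => (hnotin y hy) (Finset.mem_insert_of_mem hyS)
      · simp only [List.toFinset_cons]
        rw [Finset.union_insert, ← Finset.insert_union]
        exact hfull
      · intro i
        cases i with
        | zero => simpa using hS
        | succ i =>
          simp only [List.take_succ_cons, List.toFinset_cons]
          rw [Finset.union_insert, ← Finset.insert_union]
          exact hpre i


lemma getLastD_concat' {β : Type*} (a d : β) : ∀ (l : List β), (l ++ [a]).getLastD d = a := by
  intro l
  induction l generalizing d with
  | nil => rfl
  | cons b t ih => rw [List.cons_append, List.getLastD_cons]; exact ih b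

/-- Lemma D (seg): realize a chain above S as a learning path. -/
lemma exists_seg (h : IsLearningSpace X L) :
    ∀ (cs : List (Finset α)) (S : Finset α), S ∈ L → (∀ T ∈ cs, T ∈ L) →
      List.Chain (· ⊆ ·) S cs →
      ∃ l : List α, l.Nodup ∧ (∀ x ∈ l, x ∉ S) ∧
        (∀ i, S ∪ (l.take i).toFinset ∈ L) ∧
        (∀ T ∈ cs, ∃ i, S ∪ (l.take i).toFinset = T) ∧
        S ∪ l.toFinset = cs.getLastD S := by
  intro cs
  induction cs with
  | nil =>
    intro S hS _ _
    exact ⟨[], by simp, by simp, by intro i; simpa using hS, by simp, by simp⟩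
  | cons T rest ih =>
    intro S hS hmem hch
    replace hch := List.isChain_cons_cons.1 hch
    obtain ⟨hST, hch⟩ := hch
    have hT : T ∈ L := hmem T (List.mem_cons_self)
    obtain ⟨l1, hnd1, hni1, hfull1, hpre1⟩ :=
      exists_path h (T \ S).card S T hS hT hST le_rfl
    obtain ⟨l2, hnd2, hni2, hpre2, hcov2, hlast2⟩ :=
      ih T hT (fun U hU => hmem U (List.mem_cons_of_mem _ hU)) hch
    have hl1T : ∀ x ∈ l1, x ∈ T := by
      intro x hx
      have hm : x ∈ S ∪ l1.toFinset := Finset.mem_union_right _ (List.mem_toFinset.2 hx)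
      rwa [hfull1] at hm
    have happ : ∀ j, S ∪ ((l1 ++ l2).take (l1.length + j)).toFinset
        = T ∪ (l2.take j).toFinset := by
      intro j
      rw [List.take_length_add_append, List.toFinset_append, ← Finset.union_assoc, hfull1]
    refine ⟨l1 ++ l2, ?_, ?_, ?_, ?_, ?_⟩
    · exact List.Nodup.append hnd1 hnd2 (fun x hx1 hx2 => hni2 x hx2 (hl1T x hx1))
    · intro x hx
      rcases List.mem_append.1 hx with hx | hx
      · exact hni1 x hx
      · exact fun hxS => hni2 x hx (hST hxS)
    · intro i
      by_cases hi : i ≤ l1.length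
      · rw [List.take_append_of_le_length hi]; exact hpre1 i
      · have : i = l1.length + (i - l1.length) := by omega
        rw [this]
        rw [happ]
        exact hpre2 _
    · intro U hU
      rcases List.mem_cons.1 hU with rfl | hU
      · exact ⟨l1.length, by
          rw [List.take_append_of_le_length le_rfl, List.take_length]; exact hfull1⟩
      · obtain ⟨j, hj⟩ := hcov2 U hU
        refine ⟨l1.length + j, ?_⟩
        rw [happ]; exact hj
    · rw [List.toFinset_append, ← Finset.union_assoc, hfull1, hlast2, List.getLastD_cons]
/-- Extend a chain in L to a full learning sequence realizing its members as prefixes. -/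
lemma chain_up (hX : ∀ T : Finset α, T ∈ L → T ⊆ X) :
    ∀ (cs : List (Finset α)) (S : Finset α), List.Chain' (· ⊆ ·) (S :: cs) →
      (∀ T ∈ cs, T ⊆ X) → S ⊆ X → List.Chain (· ⊆ ·) S (cs ++ [X]) := by
  intro cs
  induction cs with
  | nil => intro S _ _ hSX; exact List.Chain.cons hSX List.Chain.nil
  | cons T rest ih =>
    intro S hch hsub hSX
    replace hch := List.isChain_cons_cons.1 hch
    exact List.Chain.cons hch.1
      (ih T hch.2 (fun U hU => hsub U (List.mem_cons_of_mem _ hU))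
        (hsub T (List.mem_cons_self)))

lemma exists_lseq (h : IsLearningSpace X L) (cs : List (Finset α))
    (hcs : ∀ S ∈ cs, S ∈ L) (hch : List.Chain' (· ⊆ ·) cs) :
    ∃ σ : List α, IsLearningSequence X L σ ∧ ∀ S ∈ cs, ∃ i, (σ.take i).toFinset = S := by
  have hchain0 : List.Chain' (· ⊆ ·) ((∅ : Finset α) :: cs) :=
    List.isChain_cons.mpr ⟨fun b _ => Finset.empty_subset b, hch⟩
  have hchain : List.Chain (· ⊆ ·) (∅ : Finset α) (cs ++ [X]) :=
    chain_up h.2.1 cs ∅ hchain0 (fun T hT => h.2.1 T (hcs T hT)) (Finset.empty_subset X)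
  have hmem : ∀ T ∈ cs ++ [X], T ∈ L := by
    intro T hT
    rcases List.mem_append.1 hT with hT | hT
    · exact hcs T hT
    · rw [List.mem_singleton] at hT; subst hT; exact top_mem h
  obtain ⟨l, hnd, -, hpre, hcov, hlast⟩ := exists_seg h (cs ++ [X]) ∅ h.1 hmem hchain
  have hfs : l.toFinset = X := by
    rw [Finset.empty_union] at hlast
    rwa [getLastD_concat'] at hlast
  refine ⟨l, ⟨hnd, hfs, fun i _ => by simpa using hpre i⟩, fun S hS => ?_⟩
  obtain ⟨i, hi⟩ := hcov S (List.mem_append_left _ hS)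
  exact ⟨i, by simpa using hi⟩

/-! ### Symmetric chain decomposition -/

variable (α) in
def scd : List α → List (List (Finset α))
  | [] => [[(∅ : Finset α)]]
  | x :: xs =>
    (scd xs).flatMap fun c =>
      if c.length ≤ 1 then [c ++ [insert x (c.getLastD ∅)]]
      else [c ++ [insert x (c.getLastD ∅)], c.dropLast.map (insert x)]

lemma getLastD_mem' {β : Type*} (c : List β) (hc : c ≠ []) (d : β) : c.getLastD d ∈ c := by
  rw [List.getLastD_eq_getLast?, List.getLast?_eq_getLast hc, Option.getD_some]
  exact List.getLast_mem hc

lemma map_getLastD' {β γ : Type*} (f : β → γ) : ∀ (c : List β) (d : β),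
    (c.map f).getLastD (f d) = f (c.getLastD d) := by
  intro c
  induction c with
  | nil => intro d; rfl
  | cons b t ih => intro d; rw [List.map_cons, List.getLastD_cons, List.getLastD_cons]; exact ih b

lemma scd_ne : ∀ (l : List α), ∀ c ∈ scd α l, c ≠ [] := by
  intro l
  induction l with
  | nil => intro c hc; simp [scd] at hc; subst hc; simp
  | cons x xs ih =>
    intro c hc
    rw [scd, List.mem_flatMap] at hc
    obtain ⟨c₀, hc₀, hc⟩ := hc
    split at hc
    · rw [List.mem_singleton] at hc; subst hc; simp
    · rcases List.mem_cons.1 hc with rfl | hc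
      · simp
      · rw [List.mem_singleton] at hc; subst hc
        have h2 : ¬ (c₀.length ≤ 1) := by assumption
        have : c₀.dropLast.length = c₀.length - 1 := List.length_dropLast
        intro hnil
        rw [List.map_eq_nil_iff] at hnil
        have := congrArg List.length hnil
        simp at this
        omega

lemma scd_subset : ∀ (l : List α), ∀ c ∈ scd α l, ∀ S ∈ c, S ⊆ l.toFinset := by
  intro l
  induction l with
  | nil => intro c hc S hS; simp [scd] at hc; subst hc; simp at hS; subst hS; simp
  | cons x xs ih =>
    intro c hc S hS
    rw [scd, List.mem_flatMap] at hc
    obtain ⟨c₀, hc₀, hc⟩ := hc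
    have hbase : ∀ U ∈ c₀, U ⊆ (x :: xs).toFinset := by
      intro U hU
      exact (ih c₀ hc₀ U hU).trans (by simp [Finset.subset_insert])
    have hins : insert x (c₀.getLastD ∅) ⊆ (x :: xs).toFinset := by
      have hgm : c₀.getLastD ∅ ∈ c₀ := getLastD_mem' c₀ (scd_ne xs c₀ hc₀) ∅
      rw [List.toFinset_cons]
      exact Finset.insert_subset_insert x (ih c₀ hc₀ _ hgm)
    have hmain : S ∈ c₀ ++ [insert x (c₀.getLastD ∅)] ∨ S ∈ c₀.dropLast.map (insert x) → S ⊆ (x :: xs).toFinset := by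
      rintro (hS' | hS')
      · rcases List.mem_append.1 hS' with hS' | hS'
        · exact hbase S hS'
        · rw [List.mem_singleton] at hS'; subst hS'; exact hins
      · rw [List.mem_map] at hS'
        obtain ⟨U, hU, rfl⟩ := hS'
        have : U ∈ c₀ := List.dropLast_sublist c₀ |>.mem hU
        rw [List.toFinset_cons]
        exact Finset.insert_subset_insert x (ih c₀ hc₀ U this)
    split at hc
    · rw [List.mem_singleton] at hc; subst hc
      exact hmain (Or.inl hS)
    · rcases List.mem_cons.1 hc with rfl | hc
      · exact hmain (Or.inl hS)
      · rw [List.mem_singleton] at hc; subst hc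
        exact hmain (Or.inr hS)

lemma scd_chain : ∀ (l : List α), ∀ c ∈ scd α l, List.Chain' (· ⊆ ·) c := by
  haveI : IsTrans (Finset α) (· ⊆ ·) := ⟨fun _ _ _ h h' => Finset.Subset.trans h h'⟩
  intro l
  induction l with
  | nil => intro c hc; simp [scd] at hc; subst hc; exact List.isChain_singleton _
  | cons x xs ih =>
    intro c hc
    rw [scd, List.mem_flatMap] at hc
    obtain ⟨c₀, hc₀, hc⟩ := hc
    have hch : List.Chain' (· ⊆ ·) c₀ := ih c₀ hc₀
    have h1 : List.Chain' (· ⊆ ·) (c₀ ++ [insert x (c₀.getLastD ∅)]) := by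
      simp only [List.Chain', List.isChain_append]
      refine ⟨hch, List.isChain_singleton _, ?_⟩
      intro y hy z hz
      rw [List.head?_cons, Option.mem_some_iff] at hz
      subst hz
      have hy' : c₀.getLastD ∅ = y := by
        rw [List.getLastD_eq_getLast?, hy, Option.getD_some]
      rw [← hy']
      exact Finset.subset_insert _ _
    have h2 : List.Chain' (· ⊆ ·) (c₀.dropLast.map (insert x)) := by
      simp only [List.Chain', List.isChain_map]
      exact (hch.sublist (List.dropLast_sublist c₀)).imp
        (fun a b hab => Finset.insert_subset_insert x hab)
    split at hc
    · rw [List.mem_singleton] at hc; subst hc; exact h1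
    · rcases List.mem_cons.1 hc with rfl | hc
      · exact h1
      · rw [List.mem_singleton] at hc; subst hc; exact h2
lemma flatMap_pair_perm {β γ : Type*} (f g : β → List γ) :
    ∀ (l : List β), (l.flatMap fun a => f a ++ g a).Perm (l.flatMap f ++ l.flatMap g) := by
  intro l
  induction l with
  | nil => simp
  | cons a t ih =>
    rw [List.flatMap_cons, List.flatMap_cons, List.flatMap_cons]
    refine (ih.append_left (f a ++ g a)).trans ?_
    rw [List.append_assoc, List.append_assoc]
    exact (List.perm_append_comm_assoc _ _ _).append_left (f a)

lemma step_perm (x : α) (c : List (Finset α)) (hc : c ≠ []) :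
    ((if c.length ≤ 1 then [c ++ [insert x (c.getLastD ∅)]]
      else [c ++ [insert x (c.getLastD ∅)], c.dropLast.map (insert x)]).flatMap id).Perm
      (c ++ c.map (insert x)) := by
  have hg : c.getLastD ∅ = c.getLast hc := by
    rw [List.getLastD_eq_getLast?, List.getLast?_eq_getLast hc, Option.getD_some]
  have hsplit : c.dropLast ++ [c.getLast hc] = c := List.dropLast_append_getLast hc
  split
  · rename_i hlen
    have h1 : c.length = 1 := by
      have := List.length_pos_iff.2 hc; omega
    obtain ⟨A, rfl⟩ := List.length_eq_one_iff.1 h1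
    simp [hg]
  · rename_i hlen
    have hmap : c.map (insert x) = c.dropLast.map (insert x) ++ [insert x (c.getLast hc)] := by
      conv_lhs => rw [← hsplit]
      rw [List.map_append, List.map_singleton]
    rw [List.flatMap_cons, List.flatMap_cons, List.flatMap_nil, List.append_nil]
    simp only [id]
    rw [hmap, hg, List.append_assoc]
    exact (List.perm_append_comm).append_left c

lemma scd_perm (x : α) (xs : List α) :
    ((scd α (x :: xs)).flatMap id).Perm
      ((scd α xs).flatMap id ++ ((scd α xs).flatMap id).map (insert x)) := by
  rw [show scd α (x :: xs) = (scd α xs).flatMap fun c =>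
      if c.length ≤ 1 then [c ++ [insert x (c.getLastD ∅)]]
      else [c ++ [insert x (c.getLastD ∅)], c.dropLast.map (insert x)] from rfl]
  rw [List.flatMap_assoc]
  refine (List.Perm.flatMap_left _ (fun c hc => step_perm x c (scd_ne xs c hc))).trans ?_
  refine (flatMap_pair_perm _ _ _).trans ?_
  rw [List.map_flatMap]
  exact List.Perm.refl _

lemma mem_flatMap_subset (l : List α) (S : Finset α) (hS : S ∈ (scd α l).flatMap id) :
    S ⊆ l.toFinset := by
  rw [List.mem_flatMap] at hS
  obtain ⟨c, hc, hSc⟩ := hS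
  exact scd_subset l c hc S hSc

lemma scd_nodup : ∀ (l : List α), l.Nodup → ((scd α l).flatMap id).Nodup := by
  intro l
  induction l with
  | nil => intro _; simp [scd]
  | cons x xs ih =>
    intro hnd
    rw [List.nodup_cons] at hnd
    have hB : ((scd α xs).flatMap id).Nodup := ih hnd.2
    have hnx : ∀ S ∈ (scd α xs).flatMap id, x ∉ S := by
      intro S hS hxS
      exact hnd.1 (by simpa using mem_flatMap_subset xs S hS hxS)
    rw [(scd_perm x xs).nodup_iff]
    refine List.Nodup.append hB ?_ ?_
    · refine List.Nodup.map_on ?_ hB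
      intro S hS T hT hEq
      have h1 : (insert x S).erase x = S := Finset.erase_insert (hnx S hS)
      have h2 : (insert x T).erase x = T := Finset.erase_insert (hnx T hT)
      rw [← h1, ← h2, hEq]
    · intro S hS hS'
      rw [List.mem_map] at hS'
      obtain ⟨U, hU, rfl⟩ := hS'
      exact hnx _ hS (Finset.mem_insert_self x U)

lemma scd_cover : ∀ (l : List α) (S : Finset α), S ⊆ l.toFinset → S ∈ (scd α l).flatMap id := by
  intro l
  induction l with
  | nil =>
    intro S hS
    have : S = ∅ := Finset.subset_empty.1 (by simpa using hS)
    subst this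
    simp [scd]
  | cons x xs ih =>
    intro S hS
    rw [(scd_perm x xs).mem_iff, List.mem_append]
    by_cases hx : x ∈ S
    · right
      rw [List.mem_map]
      refine ⟨S.erase x, ih _ ?_, Finset.insert_erase hx⟩
      intro a ha
      have h1 := Finset.mem_erase.1 ha
      have h2 := hS h1.2
      rw [List.toFinset_cons, Finset.mem_insert] at h2
      tauto
    · left
      refine ih S ?_
      intro a ha
      have h2 := hS ha
      rw [List.toFinset_cons, Finset.mem_insert] at h2
      rcases h2 with rfl | h2
      · exact absurd ha hx
      · exact h2

lemma scd_sizes : ∀ (l : List α), l.Nodup → ∀ c ∈ scd α l,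
    ∃ a, c.map Finset.card = List.range' a c.length ∧ 2 * a + c.length = l.length + 1 := by
  intro l
  induction l with
  | nil =>
    intro _ c hc
    simp [scd] at hc; subst hc
    exact ⟨0, by simp [List.range'], by simp⟩
  | cons x xs ih =>
    intro hnd c hc
    rw [List.nodup_cons] at hnd
    rw [scd, List.mem_flatMap] at hc
    obtain ⟨c₀, hc₀, hc⟩ := hc
    obtain ⟨a, hmap, hsum⟩ := ih hnd.2 c₀ hc₀
    have hc₀ne : c₀ ≠ [] := scd_ne xs c₀ hc₀
    have hpos : 1 ≤ c₀.length := List.length_pos_iff.2 hc₀ne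
    obtain ⟨m, hm⟩ : ∃ m, c₀.length = m + 1 := ⟨c₀.length - 1, by omega⟩
    have hxnotin : ∀ U ∈ c₀, x ∉ U := by
      intro U hU hxU
      exact hnd.1 (by simpa using scd_subset xs c₀ hc₀ U hU hxU)
    have hglast : c₀.getLastD ∅ ∈ c₀ := getLastD_mem' c₀ hc₀ne ∅
    have hgcard : (c₀.getLastD ∅).card = a + m := by
      have h1 : (c₀.map Finset.card).getLastD 0 = (c₀.getLastD ∅).card := by
        have := map_getLastD' Finset.card c₀ ∅
        simpa using this
      rw [hmap, hm] at h1
      rw [List.range'_concat] at h1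
      rw [getLastD_concat'] at h1
      omega
    -- the two candidate chains
    have case1 : ∃ a', (c₀ ++ [insert x (c₀.getLastD ∅)]).map Finset.card
        = List.range' a' (c₀ ++ [insert x (c₀.getLastD ∅)]).length ∧
        2 * a' + (c₀ ++ [insert x (c₀.getLastD ∅)]).length = (x :: xs).length + 1 := by
      refine ⟨a, ?_, ?_⟩
      · have hcard : (insert x (c₀.getLastD ∅)).card = a + m + 1 := by
          rw [Finset.card_insert_of_notMem (hxnotin _ hglast), hgcard]
        have hlen : (c₀ ++ [insert x (c₀.getLastD ∅)]).length = m + 1 + 1 := by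
          rw [List.length_append, List.length_singleton, hm]
        rw [hlen, List.map_append, List.map_singleton, hmap, hm, hcard]
        conv_rhs => rw [List.range'_concat]
        congr 1
        congr 1
        ring
      · rw [List.length_append, List.length_singleton, List.length_cons]
        omega
    have case2 : ∃ a', (c₀.dropLast.map (insert x)).map Finset.card
        = List.range' a' (c₀.dropLast.map (insert x)).length ∧
        2 * a' + (c₀.dropLast.map (insert x)).length = (x :: xs).length + 1 := by
      refine ⟨a + 1, ?_, ?_⟩
      · rw [List.map_map]
        have hcongr : c₀.dropLast.map (Finset.card ∘ insert x) = c₀.dropLast.map (fun U => U.card + 1) := by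
          apply List.map_congr_left
          intro U hU
          have hUc : U ∈ c₀ := (List.dropLast_sublist c₀).mem hU
          exact Finset.card_insert_of_notMem (hxnotin U hUc)
        rw [hcongr]
        have hdl : c₀.dropLast.map Finset.card = List.range' a m := by
          have h1 : (c₀.map Finset.card).dropLast = c₀.dropLast.map Finset.card :=
            List.map_dropLast.symm
          rw [hmap, hm, List.range'_concat] at h1
          rw [List.dropLast_concat] at h1
          exact h1.symm
        have h2 : c₀.dropLast.map (fun U => U.card + 1)
            = (c₀.dropLast.map Finset.card).map (fun n => n + 1) := by
          rw [List.map_map]; rfl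
        rw [h2, hdl]
        rw [List.length_map, List.length_dropLast, hm]
        have : (List.range' a m).map (fun n => n + 1) = List.range' (a + 1) m := by
          have := List.map_add_range' (a := 1) a m 1
          simpa [Nat.add_comm] using this
        rw [this]
        simp
      · rw [List.length_map, List.length_dropLast, List.length_cons, hm]
        omega
    split at hc
    · rw [List.mem_singleton] at hc; subst hc; exact case1
    · rcases List.mem_cons.1 hc with rfl | hc
      · exact case1
      · rw [List.mem_singleton] at hc; subst hc; exact case2

lemma scd_middle (l : List α) (hnd : l.Nodup) : ∀ ch ∈ scd α l,
    ∃ S ∈ ch, S.card = l.length / 2 := by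
  intro ch hc
  obtain ⟨a, hmap, hsum⟩ := scd_sizes l hnd ch hc
  have hcne : ch ≠ [] := scd_ne l ch hc
  have hpos : 1 ≤ ch.length := List.length_pos_iff.2 hcne
  set n := l.length with hn
  have hj : l.length / 2 - a < ch.length ∧ a + (l.length / 2 - a) = l.length / 2 := by omega
  set j := l.length / 2 - a with hjdef
  have hjlt : j < ch.length := hj.1
  refine ⟨ch[j], List.getElem_mem hjlt, ?_⟩
  have hjlt' : j < (ch.map Finset.card).length := by rw [List.length_map]; exact hjlt
  have h1 : (ch.map Finset.card)[j] = (ch[j]).card := List.getElem_map _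
  have h2 := List.getElem_of_eq hmap hjlt'
  rw [List.getElem_range'] at h2
  rw [h1] at h2
  omega

end Stmt6Aux

open Stmt6Aux in
/-- Every learning space `𝓛` on a set of `n ≥ 1` elements can be defined by a set `Σ`
of at most `C(n, ⌊n/2⌋)` learning sequences, i.e. with `𝓛_Σ = 𝓛`. -/
theorem stmt6 {α : Type*} [DecidableEq α] (X : Finset α) (hn : 1 ≤ X.card)
    (L : Set (Finset α)) (hL : IsLearningSpace X L) :
    ∃ Sig : Finset (List α),
      Sig.card ≤ Nat.choose X.card (X.card / 2) ∧
      (∀ σ ∈ Sig, IsLearningSequence X L σ) ∧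
      LSigma Sig = L := by
  classical
  haveI : IsTrans (Finset α) (· ⊆ ·) := ⟨fun _ _ _ h h' => Finset.Subset.trans h h'⟩
  set l := X.toList with hldef
  have hlnd : l.Nodup := X.nodup_toList
  have hlt : l.toFinset = X := Finset.toList_toFinset X
  have hll : l.length = X.card := Finset.length_toList X
  -- learning sequences for each chain
  have hex : ∀ c ∈ scd α l, ∃ σ : List α, IsLearningSequence X L σ ∧
      ∀ S ∈ c, S ∈ L → ∃ i, (σ.take i).toFinset = S := by
    intro c hc
    have hchain : List.Chain' (· ⊆ ·) (c.filter (fun S => decide (S ∈ L))) :=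
      (scd_chain l c hc).sublist List.filter_sublist
    have hmem : ∀ S ∈ c.filter (fun S => decide (S ∈ L)), S ∈ L := by
      intro S hS
      have := List.mem_filter.1 hS
      simpa using this.2
    obtain ⟨σ, h1, h2⟩ := exists_lseq hL _ hmem hchain
    refine ⟨σ, h1, fun S hS hSL => h2 S (List.mem_filter.2 ⟨hS, by simpa using hSL⟩)⟩
  choose! F hF1 hF2 using hex
  set Sig : Finset (List α) := ((scd α l).map F).toFinset with hSig
  have hSigMem : ∀ σ ∈ Sig, ∃ c ∈ scd α l, F c = σ := by
    intro σ hσ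
    rw [hSig, List.mem_toFinset, List.mem_map] at hσ
    exact hσ
  refine ⟨Sig, ?_, ?_, ?_⟩
  · -- cardinality bound
    set m : List (Finset α) → Finset α := fun c =>
      if h : ∃ S ∈ c, S.card = l.length / 2 then h.choose else ∅ with hm
    have hmprop : ∀ c ∈ scd α l, m c ∈ c ∧ (m c).card = l.length / 2 := by
      intro c hc
      have hex' := scd_middle l hlnd c hc
      rw [hm]
      simp only [dif_pos hex']
      exact ⟨hex'.choose_spec.1, hex'.choose_spec.2⟩
    have hpair : ((scd α l).map m).Nodup := by
      have hnd2 := scd_nodup l hlnd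
      rw [List.nodup_flatMap] at hnd2
      have hdisj : (scd α l).Pairwise (fun c d => m c ≠ m d) := by
        refine hnd2.2.imp_of_mem ?_
        intro c d hcm hdm hcd hEq
        exact hcd (hEq ▸ (hmprop c hcm).1) ((hmprop d hdm).1)
      exact List.Pairwise.map m (fun a b hab => hab) hdisj
    have hsub : ((scd α l).map m).toFinset ⊆ X.powersetCard (X.card / 2) := by
      intro S hS
      rw [List.mem_toFinset, List.mem_map] at hS
      obtain ⟨c, hc, rfl⟩ := hS
      rw [Finset.mem_powersetCard]
      refine ⟨?_, ?_⟩
      · have := scd_subset l c hc (m c) (hmprop c hc).1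
        rwa [hlt] at this
      · rw [(hmprop c hc).2, hll]
    calc Sig.card ≤ ((scd α l).map F).length := List.toFinset_card_le _
      _ = (scd α l).length := List.length_map _
      _ = ((scd α l).map m).length := (List.length_map _).symm
      _ = ((scd α l).map m).toFinset.card := (List.toFinset_card_of_nodup hpair).symm
      _ ≤ (X.powersetCard (X.card / 2)).card := Finset.card_le_card hsub
      _ = Nat.choose X.card (X.card / 2) := Finset.card_powersetCard _ _
  · -- all members are learning sequences
    intro σ hσ
    obtain ⟨c, hc, rfl⟩ := hSigMem σ hσ
    exact hF1 c hc
  · -- LSigma Sig = L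
    ext S
    constructor
    · rintro ⟨f, hf⟩
      rw [hf]
      apply Finset.sup_induction
      · simpa [Finset.bot_eq_empty] using hL.1
      · intro S1 h1 S2 h2
        have := hL.2.2.2.2 S1 h1 S2 h2
        simpa [Finset.sup_eq_union] using this
      · intro σ hσ
        obtain ⟨c, hc, rfl⟩ := hSigMem σ hσ
        obtain ⟨hnd, hfs, hpre⟩ := hF1 c hc
        by_cases hi : f (F c) ≤ (F c).length
        · exact hpre _ hi
        · rw [List.take_of_length_le (by omega)]
          rw [hfs]
          exact top_mem hL
    · intro hS
      have hsubX : S ⊆ l.toFinset := by rw [hlt]; exact hL.2.1 S hS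
      have hmem := scd_cover l S hsubX
      rw [List.mem_flatMap] at hmem
      obtain ⟨c, hc, hSc⟩ := hmem
      obtain ⟨i, hi⟩ := hF2 c hc S hSc hS
      refine ⟨fun τ => if τ = F c then i else 0, ?_⟩
      have hFcSig : F c ∈ Sig := by
        rw [hSig, List.mem_toFinset, List.mem_map]
        exact ⟨c, hc, rfl⟩
      apply le_antisymm
      · have := Finset.le_sup (f := fun σ => (σ.take (if σ = F c then i else 0)).toFinset) hFcSig
        simpa [hi] using this
      · apply Finset.sup_le
        intro τ hτ
        by_cases hτc : τ = F c
        · subst hτc; simp [hi]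
        · simp [hτc, Finset.empty_subset]
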